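/- In a morphic triple (V, W, β) with dim V = d, the map U ↦ U' from maximal subspaces of V to maximal subspaces of W has fibers of size p+1, hence (1 + p + ⋯ + p^{d-1}) is divisible by 1 + p; in particular d is even. -/

import Mathlib

open Module

variable {p : ℕ}

/-- The "derived" subspace `[U₁, U₂]`: the span of the values `β x y` for
`x ∈ U₁`, `y ∈ U₂`. -/
def pairSpan {V W : Type*} [AddCommGroup V] [Module (ZMod p) V]
    [AddCommGroup W] [Module (ZMod p) W]
    (β : V →ₗ[ZMod p] V →ₗ[ZMod p] W) (U₁ U₂ : Submodule (ZMod p) V) :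
    Submodule (ZMod p) W :=
  Submodule.span (ZMod p) {w | ∃ x ∈ U₁, ∃ y ∈ U₂, β x y = w}

/-- `U' = [U, U]`. -/
def der {V W : Type*} [AddCommGroup V] [Module (ZMod p) V]
    [AddCommGroup W] [Module (ZMod p) W]
    (β : V →ₗ[ZMod p] V →ₗ[ZMod p] W) (U : Submodule (ZMod p) V) :
    Submodule (ZMod p) W :=
  pairSpan β U U

/-- `(V, W, β)` is a morphic triple if `β` is alternating, `V' = W`, `U'` is a maximal
subspace of `W` for every maximal subspace `U` of `V`, and the intersection of all
such `U'` is zero. -/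
def IsMorphicTriple {V W : Type*} [AddCommGroup V] [Module (ZMod p) V]
    [AddCommGroup W] [Module (ZMod p) W]
    (β : V →ₗ[ZMod p] V →ₗ[ZMod p] W) : Prop :=
  (∀ v : V, β v v = 0) ∧
  der β ⊤ = ⊤ ∧
  (∀ U : Submodule (ZMod p) V, IsCoatom U → IsCoatom (der β U)) ∧
  (⨅ (U : Submodule (ZMod p) V) (_ : IsCoatom U), der β U) = ⊥


set_option linter.unusedSectionVars false

section Helpers
open Submodule Finset
variable [Fact p.Prime]

section count
variable {X : Type*} [AddCommGroup X] [Module (ZMod p) X] [FiniteDimensional (ZMod p) X]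

lemma coatom_card :
    Set.ncard {U : Submodule (ZMod p) X | IsCoatom U}
      = ∑ i ∈ Finset.range (finrank (ZMod p) X), p ^ i := by
  classical
  have hp2 : 2 ≤ p := (Fact.out : p.Prime).two_le
  set n := finrank (ZMod p) X with hn
  have : Finite X := Module.finite_of_finite (ZMod p)
  have : Fintype X := Fintype.ofFinite X
  have : Finite (Module.Dual (ZMod p) X) := Module.finite_of_finite (ZMod p)
  have : Fintype (Module.Dual (ZMod p) X) := Fintype.ofFinite _
  have : Finite (Submodule (ZMod p) X) :=
    Finite.of_injective _ (SetLike.coe_injective (A := Submodule (ZMod p) X))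
  have : Fintype (Submodule (ZMod p) X) := Fintype.ofFinite _
  set C : Finset (Submodule (ZMod p) X) := Finset.univ.filter IsCoatom with hC
  set S : Finset (Module.Dual (ZMod p) X) := Finset.univ.filter (· ≠ 0) with hS
  have hcardD : Fintype.card (Module.Dual (ZMod p) X) = p ^ n := by
    rw [card_eq_pow_finrank (K := ZMod p), ZMod.card, Subspace.dual_finrank_eq]
  have hScard : S.card = p ^ n - 1 := by
    rw [hS, Finset.filter_ne', Finset.card_erase_of_mem (Finset.mem_univ _),
      Finset.card_univ, hcardD]
  have hker : ∀ f : Module.Dual (ZMod p) X, f ≠ 0 → IsCoatom (LinearMap.ker f) := by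
    intro f hf
    apply LinearMap.isCoatom_ker_of_surjective
    obtain ⟨x, hx⟩ : ∃ x, f x ≠ 0 := by
      by_contra h; push_neg at h; exact hf (LinearMap.ext fun x => h x)
    intro c
    exact ⟨(c * (f x)⁻¹) • x, by simp [mul_assoc, inv_mul_cancel₀ hx]⟩
  have hfib : ∀ U ∈ C, (S.filter (fun f => LinearMap.ker f = U)).card = p - 1 := by
    intro U hU
    have hUco : IsCoatom U := by simpa [hC] using hU
    have hsimple : IsSimpleModule (ZMod p) (X ⧸ U) := isSimpleModule_iff_isCoatom.2 hUco
    have : Nontrivial (X ⧸ U) := IsSimpleModule.nontrivial (ZMod p) (X ⧸ U)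
    obtain ⟨q, hq⟩ := exists_ne (0 : X ⧸ U)
    have hrk1 : finrank (ZMod p) (X ⧸ U) = 1 := by
      refine finrank_eq_one q hq fun w => ?_
      have hsp : Submodule.span (ZMod p) {q} = ⊤ := by
        rcases eq_bot_or_eq_top (Submodule.span (ZMod p) {q}) with h | h
        · exact absurd (h ▸ Submodule.mem_span_singleton_self q) (by simpa using hq)
        · exact h
      have hw : w ∈ Submodule.span (ZMod p) {q} := hsp ▸ Submodule.mem_top
      rwa [Submodule.mem_span_singleton] at hw
    let e : (X ⧸ U) ≃ₗ[ZMod p] (ZMod p) :=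
      LinearEquiv.ofFinrankEq _ _ (by rw [hrk1, finrank_self])
    set f₀ : Module.Dual (ZMod p) X := e.toLinearMap ∘ₗ U.mkQ with hf₀
    have hkf₀ : LinearMap.ker f₀ = U := by
      rw [hf₀, LinearMap.ker_comp, LinearEquiv.ker, Submodule.comap_bot, Submodule.ker_mkQ]
    have hf₀ne : f₀ ≠ 0 := by
      intro h
      have h2 : LinearMap.ker f₀ = ⊤ := by rw [h]; exact LinearMap.ker_zero
      exact hUco.1 (by rw [← hkf₀, h2])
    obtain ⟨x, hx⟩ : ∃ x, x ∉ U := by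
      by_contra h; push_neg at h
      exact hUco.1 (Submodule.eq_top_iff'.2 h)
    have hf₀x : f₀ x ≠ 0 := by rwa [← hkf₀, LinearMap.mem_ker] at hx
    rw [show p - 1 = ((Finset.univ.erase (0 : ZMod p))).card by
      rw [Finset.card_erase_of_mem (Finset.mem_univ _), Finset.card_univ, ZMod.card]]
    refine Finset.card_bij' (fun g _ => g x * (f₀ x)⁻¹) (fun c _ => c • f₀) ?_ ?_ ?_ ?_
    · intro g hg
      simp only [hS, Finset.mem_filter, Finset.mem_univ, true_and] at hg
      obtain ⟨hgne, hgk⟩ := hg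
      have hgx : g x ≠ 0 := by rw [← hgk, LinearMap.mem_ker] at hx; exact hx
      exact Finset.mem_erase.2 ⟨mul_ne_zero hgx (inv_ne_zero hf₀x), Finset.mem_univ _⟩
    · intro c hc
      have hcne : c ≠ 0 := (Finset.mem_erase.1 hc).1
      simp only [hS, Finset.mem_filter, Finset.mem_univ, true_and]
      exact ⟨smul_ne_zero hcne hf₀ne, (LinearMap.ker_smul f₀ c hcne).trans hkf₀⟩
    · intro g hg
      simp only [hS, Finset.mem_filter, Finset.mem_univ, true_and] at hg
      obtain ⟨hgne, hgk⟩ := hg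
      -- show (g x * (f₀ x)⁻¹) • f₀ = g
      ext v
      have hw : v - ((f₀ v) * (f₀ x)⁻¹) • x ∈ LinearMap.ker f₀ := by
        simp only [LinearMap.mem_ker, map_sub, map_smul, smul_eq_mul]
        field_simp
        simp
      rw [hkf₀, ← hgk, LinearMap.mem_ker, map_sub, map_smul, sub_eq_zero, smul_eq_mul] at hw
      simp only [LinearMap.smul_apply, smul_eq_mul]
      rw [hw]; field_simp
    · intro c hc
      have hcne : c ≠ 0 := (Finset.mem_erase.1 hc).1
      simp only [LinearMap.smul_apply, smul_eq_mul]
      field_simp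
  have h2 : S.card = C.card * (p - 1) := by
    rw [Finset.card_eq_sum_card_fiberwise (f := fun f => LinearMap.ker f) (t := C)
      (fun f hf => by
        simp only [Finset.mem_coe, hS, Finset.mem_filter, Finset.mem_univ, true_and] at hf
        simp [hC, hker f hf])]
    rw [Finset.sum_congr rfl hfib, Finset.sum_const, smul_eq_mul]
  -- identify the set with C
  have hset : {U : Submodule (ZMod p) X | IsCoatom U} = ↑C := by
    ext U; simp [hC]
  rw [hset, Set.ncard_coe_finset]
  -- arithmetic
  have key : (C.card : ℤ) * (p - 1) = (∑ i ∈ Finset.range n, (p : ℤ) ^ i) * (p - 1) := by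
    have h3 : (C.card : ℤ) * ((p : ℤ) - 1) = (p : ℤ) ^ n - 1 := by
      have h0 : (C.card * (p - 1) : ℕ) = p ^ n - 1 := h2.symm.trans hScard
      have hple : (1 : ℕ) ≤ p ^ n := Nat.one_le_pow _ _ (by omega)
      have h4 : ((C.card * (p - 1) : ℕ) : ℤ) = ((p ^ n - 1 : ℕ) : ℤ) := by rw [h0]
      push_cast [Nat.cast_sub hple, Nat.cast_sub (by omega : 1 ≤ p)] at h4
      linarith [h4]
    rw [h3, geom_sum_mul]
  have hcancel : (C.card : ℤ) = ∑ i ∈ Finset.range n, (p : ℤ) ^ i := by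
    have hne : ((p : ℤ) - 1) ≠ 0 := by
      have : (2 : ℤ) ≤ p := by exact_mod_cast hp2
      omega
    exact mul_right_cancel₀ hne key
  exact_mod_cast hcancel
end count


lemma coatoms_above {X : Type*} [AddCommGroup X] [Module (ZMod p) X]
    (R : Submodule (ZMod p) X) :
    {U : Submodule (ZMod p) X | IsCoatom U ∧ R ≤ U}
      = (Submodule.comap R.mkQ) '' {Y : Submodule (ZMod p) (X ⧸ R) | IsCoatom Y} := by
  have hsurj := R.mkQ_surjective
  ext U
  simp only [Set.mem_setOf_eq, Set.mem_image]
  constructor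
  · rintro ⟨hUco, hRU⟩
    refine ⟨Submodule.map R.mkQ U, ?_, ?_⟩
    · constructor
      · intro htop
        have : U = ⊤ := by
          have := congrArg (Submodule.comap R.mkQ) htop
          rwa [Submodule.comap_map_eq, Submodule.ker_mkQ, sup_eq_left.2 hRU,
            Submodule.comap_top] at this
        exact hUco.1 this
      · intro Y' hY'
        have hU' : U ≤ Submodule.comap R.mkQ Y' := by
          have : Submodule.comap R.mkQ (Submodule.map R.mkQ U) ≤ Submodule.comap R.mkQ Y' :=
            Submodule.comap_mono hY'.le
          rwa [Submodule.comap_map_eq, Submodule.ker_mkQ, sup_eq_left.2 hRU] at this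
        have hne : U ≠ Submodule.comap R.mkQ Y' := by
          intro h
          have := congrArg (Submodule.map R.mkQ) h
          rw [Submodule.map_comap_eq_of_surjective hsurj] at this
          exact hY'.ne this
        have := hUco.2 _ (lt_of_le_of_ne hU' hne)
        have := congrArg (Submodule.map R.mkQ) this
        rwa [Submodule.map_comap_eq_of_surjective hsurj, Submodule.map_top,
          Submodule.range_mkQ] at this
    · rw [Submodule.comap_map_eq, Submodule.ker_mkQ, sup_eq_left.2 hRU]
  · rintro ⟨Y, hYco, rfl⟩
    refine ⟨⟨?_, ?_⟩, ?_⟩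
    · intro htop
      have := congrArg (Submodule.map R.mkQ) htop
      rw [Submodule.map_comap_eq_of_surjective hsurj, Submodule.map_top,
        Submodule.range_mkQ] at this
      exact hYco.1 this
    · intro B hB
      have hRB : R ≤ B := by
        have h5 : LinearMap.ker R.mkQ ≤ Submodule.comap R.mkQ Y := Submodule.comap_mono bot_le
        rw [Submodule.ker_mkQ] at h5
        exact le_trans h5 hB.le
      have hYB : Y ≤ Submodule.map R.mkQ B := by
        have h6 := Submodule.map_mono (f := R.mkQ) hB.le
        rwa [Submodule.map_comap_eq_of_surjective hsurj] at h6
      have hne : Y ≠ Submodule.map R.mkQ B := by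
        intro h
        have := congrArg (Submodule.comap R.mkQ) h
        rw [Submodule.comap_map_eq, Submodule.ker_mkQ, sup_eq_left.2 hRB] at this
        exact hB.ne this
      have := hYco.2 _ (lt_of_le_of_ne hYB hne)
      have := congrArg (Submodule.comap R.mkQ) this
      rwa [Submodule.comap_map_eq, Submodule.ker_mkQ, sup_eq_left.2 hRB,
        Submodule.comap_top] at this
    · have h5 : LinearMap.ker R.mkQ ≤ Submodule.comap R.mkQ Y := Submodule.comap_mono bot_le
      rwa [Submodule.ker_mkQ] at h5


section main
variable [Fact p.Prime]
variable {V W : Type*} [AddCommGroup V] [Module (ZMod p) V] [FiniteDimensional (ZMod p) V]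
  [AddCommGroup W] [Module (ZMod p) W] [FiniteDimensional (ZMod p) W]
  (β : V →ₗ[ZMod p] V →ₗ[ZMod p] W)

lemma mem_der {U : Submodule (ZMod p) V} {x y : V} (hx : x ∈ U) (hy : y ∈ U) :
    β x y ∈ der β U :=
  Submodule.subset_span ⟨x, hx, y, hy, rfl⟩

lemma der_le_iff {U : Submodule (ZMod p) V} {Z : Submodule (ZMod p) W} :
    der β U ≤ Z ↔ ∀ x ∈ U, ∀ y ∈ U, β x y ∈ Z := by
  rw [der, pairSpan, Submodule.span_le]
  constructor
  · intro h x hx y hy; exact h ⟨x, hx, y, hy, rfl⟩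
  · rintro h w ⟨x, hx, y, hy, rfl⟩; exact h x hx y hy

lemma skew (halt : ∀ v : V, β v v = 0) (x y : V) : β x y = - β y x := by
  have h := halt (x + y)
  simp only [map_add, LinearMap.add_apply, halt x, halt y, zero_add, add_zero] at h
  exact eq_neg_of_add_eq_zero_right h


set_option maxHeartbeats 1000000 in
lemma fiber_ncard (halt : ∀ v : V, β v v = 0) (htop : der β ⊤ = ⊤)
    (hco : ∀ U : Submodule (ZMod p) V, IsCoatom U → IsCoatom (der β U))
    {Z : Submodule (ZMod p) W} {U₀ : Submodule (ZMod p) V}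
    (hU₀ : IsCoatom U₀) (hderU₀ : der β U₀ = Z) :
    Set.ncard {U : Submodule (ZMod p) V | IsCoatom U ∧ der β U = Z} = p + 1 := by
  classical
  have hZco : IsCoatom Z := hderU₀ ▸ hco U₀ hU₀
  have hZne : Z ≠ ⊤ := hZco.1
  set π := Z.mkQ with hπ
  have hπ0 : ∀ w, π w = 0 ↔ w ∈ Z := fun w => by
    rw [hπ, Submodule.mkQ_apply, Submodule.Quotient.mk_eq_zero]
  -- the radical R
  set R : Submodule (ZMod p) V :=
    LinearMap.ker ((LinearMap.llcomp (ZMod p) V W (W ⧸ Z) π) ∘ₗ β) with hR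
  have memR : ∀ v, v ∈ R ↔ ∀ t, β v t ∈ Z := by
    intro v
    rw [hR, LinearMap.mem_ker, LinearMap.comp_apply]
    constructor
    · intro h t
      have := congrFun (congrArg DFunLike.coe h) t
      simpa [hπ0] using this
    · intro h
      ext t
      simpa [hπ0] using h t
  have memR' : ∀ v, v ∈ R → ∀ t, β t v ∈ Z := by
    intro v hv t
    rw [skew β halt]
    exact Z.neg_mem ((memR v).1 hv t)
  -- basic membership facts
  have hU₀mem : ∀ x ∈ U₀, ∀ y ∈ U₀, β x y ∈ Z :=
    fun x hx y hy => hderU₀ ▸ mem_der β hx hy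
  -- decomposition along a coatom
  have hdec : ∀ (U : Submodule (ZMod p) V), IsCoatom U → ∀ w, w ∉ U →
      ∀ v, ∃ u ∈ U, ∃ c : ZMod p, v = u + c • w := by
    intro U hUco w hw v
    have hlt : U < U ⊔ Submodule.span (ZMod p) {w} := by
      refine lt_of_le_of_ne le_sup_left fun h => hw ?_
      rw [h]
      exact Submodule.mem_sup_right (Submodule.mem_span_singleton_self w)
    have htopU : U ⊔ Submodule.span (ZMod p) {w} = ⊤ := hUco.2 _ hlt
    have hv : v ∈ U ⊔ Submodule.span (ZMod p) {w} := htopU ▸ Submodule.mem_top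
    obtain ⟨u, hu, s, hs, rfl⟩ := Submodule.mem_sup.1 hv
    obtain ⟨c, rfl⟩ := Submodule.mem_span_singleton.1 hs
    exact ⟨u, hu, c, rfl⟩
  -- L1 : coatoms whose der is within Z contain R
  have L1 : ∀ (U : Submodule (ZMod p) V), IsCoatom U →
      (∀ x ∈ U, ∀ y ∈ U, β x y ∈ Z) → R ≤ U := by
    intro U hUco hmem r hr
    by_contra hru
    have hdle : der β ⊤ ≤ Z := by
      rw [der_le_iff]
      intro s _ t _
      obtain ⟨u, hu, c, rfl⟩ := hdec U hUco r hru s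
      obtain ⟨u', hu', c', rfl⟩ := hdec U hUco r hru t
      have h1 : β (u + c • r) (u' + c' • r)
          = β u u' + c' • β u r + c • β r u' + (c * c') • β r r := by
        simp only [map_add, map_smul, LinearMap.add_apply, LinearMap.smul_apply]
        module
      rw [h1]
      refine Z.add_mem (Z.add_mem (Z.add_mem (hmem u hu u' hu') ?_) ?_) ?_
      · exact Z.smul_mem _ (memR' r hr u)
      · exact Z.smul_mem _ ((memR r).1 hr u')
      · exact Z.smul_mem _ ((memR r).1 hr r)
    rw [htop, top_le_iff] at hdle
    exact hZne hdle
  -- there exist x y with β x y ∉ Z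
  have hbne : ∃ x y, β x y ∉ Z := by
    by_contra h
    push_neg at h
    have : der β ⊤ ≤ Z := (der_le_iff β).2 fun x _ y _ => h x y
    rw [htop, top_le_iff] at this
    exact hZne this
  have hRU₀ : R ≤ U₀ := L1 U₀ hU₀ hU₀mem
  -- scalars in the simple quotient
  have hQsimple : IsSimpleModule (ZMod p) (W ⧸ Z) := isSimpleModule_iff_isCoatom.2 hZco
  have hscal : ∀ e : W ⧸ Z, e ≠ 0 → ∀ q : W ⧸ Z, ∃ c : ZMod p, q = c • e := by
    intro e he q
    have hsp : Submodule.span (ZMod p) {e} = ⊤ := by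
      rcases eq_bot_or_eq_top (Submodule.span (ZMod p) {e}) with h | h
      · exact absurd (h ▸ Submodule.mem_span_singleton_self e) (by simpa using he)
      · exact h
    have hq : q ∈ Submodule.span (ZMod p) {e} := hsp ▸ Submodule.mem_top
    obtain ⟨c, hc⟩ := Submodule.mem_span_singleton.1 hq
    exact ⟨c, hc.symm⟩
  -- fix v₀ outside U₀
  obtain ⟨v₀, hv₀⟩ : ∃ v₀, v₀ ∉ U₀ := by
    by_contra h; push_neg at h
    exact hU₀.1 (Submodule.eq_top_iff'.2 h)
  -- the computation lemma
  have hcomp : ∀ u ∈ U₀, ∀ u' ∈ U₀, ∀ c c' : ZMod p,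
      π (β (u + c • v₀) (u' + c' • v₀)) = c' • π (β u v₀) - c • π (β u' v₀) := by
    intro u hu u' hu' c c'
    have h1 : β (u + c • v₀) (u' + c' • v₀)
        = β u u' + c' • β u v₀ + c • β v₀ u' + (c * c') • β v₀ v₀ := by
      simp only [map_add, map_smul, LinearMap.add_apply, LinearMap.smul_apply]
      module
    rw [h1]
    have h2 : π (β u u') = 0 := (hπ0 _).2 (hU₀mem u hu u' hu')
    have h3 : β v₀ v₀ = 0 := halt v₀
    have h4 : β v₀ u' = - β u' v₀ := skew β halt _ _
    simp only [map_add, map_smul, h2, h3, h4, map_neg, map_zero, smul_zero, smul_neg,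
      zero_add, add_zero]
    abel
  -- L2 : decomposition of V by R, x, y when β x y ∉ Z
  have L2 : ∀ x y, β x y ∉ Z → ∀ v, ∃ r ∈ R, ∃ a b : ZMod p, v = r + a • x + b • y := by
    intro x y hxy v
    set e : W ⧸ Z := π (β x y) with he'
    have he : e ≠ 0 := fun h => hxy ((hπ0 _).1 h)
    obtain ⟨u₁, hu₁, c₁, hx⟩ := hdec U₀ hU₀ v₀ hv₀ x
    obtain ⟨u₂, hu₂, c₂, hy⟩ := hdec U₀ hU₀ v₀ hv₀ y
    obtain ⟨u', hu', c', hv⟩ := hdec U₀ hU₀ v₀ hv₀ v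
    obtain ⟨s₁, hs₁⟩ := hscal e he (π (β u₁ v₀))
    obtain ⟨s₂, hs₂⟩ := hscal e he (π (β u₂ v₀))
    obtain ⟨s', hs'⟩ := hscal e he (π (β u' v₀))
    have h0 : e = (c₂ * s₁ - c₁ * s₂) • e := by
      have h0 : π (β x y) = c₂ • π (β u₁ v₀) - c₁ • π (β u₂ v₀) := by
        rw [hx, hy]; exact hcomp u₁ hu₁ u₂ hu₂ c₁ c₂
      rw [← he', hs₁, hs₂] at h0
      calc e = c₂ • (s₁ • e) - c₁ • (s₂ • e) := h0
        _ = (c₂ * s₁ - c₁ * s₂) • e := by module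
    have hdet' : c₂ * s₁ - c₁ * s₂ = 1 := by
      have hz : (c₂ * s₁ - c₁ * s₂ - 1) • e = 0 := by
        rw [sub_smul, ← h0, one_smul, sub_self]
      rcases smul_eq_zero.1 hz with h | h
      · exact sub_eq_zero.1 h
      · exact absurd h he
    refine ⟨v - (s' * c₂ - s₂ * c') • x - (s₁ * c' - s' * c₁) • y, ?_, 
      (s' * c₂ - s₂ * c'), (s₁ * c' - s' * c₁), by abel⟩
    rw [memR]
    intro t
    rw [← hπ0]
    obtain ⟨u, hu, c, ht⟩ := hdec U₀ hU₀ v₀ hv₀ t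
    obtain ⟨su, hsu⟩ := hscal e he (π (β u v₀))
    have hb1 : π (β v t) = (c * s' - c' * su) • e := by
      rw [hv, ht, hcomp u' hu' u hu c' c, hs', hsu]; module
    have hb2 : π (β x t) = (c * s₁ - c₁ * su) • e := by
      rw [hx, ht, hcomp u₁ hu₁ u hu c₁ c, hs₁, hsu]; module
    have hb3 : π (β y t) = (c * s₂ - c₂ * su) • e := by
      rw [hy, ht, hcomp u₂ hu₂ u hu c₂ c, hs₂, hsu]; module
    have hsplit : β (v - (s' * c₂ - s₂ * c') • x - (s₁ * c' - s' * c₁) • y) t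
        = β v t - (s' * c₂ - s₂ * c') • β x t - (s₁ * c' - s' * c₁) • β y t := by
      simp only [map_sub, map_smul, LinearMap.sub_apply, LinearMap.smul_apply]
    rw [hsplit]
    have : π (β v t - (s' * c₂ - s₂ * c') • β x t - (s₁ * c' - s' * c₁) • β y t)
        = ((c * s' - c' * su) - (s' * c₂ - s₂ * c') * (c * s₁ - c₁ * su)
            - (s₁ * c' - s' * c₁) * (c * s₂ - c₂ * su)) • e := by
      simp only [map_sub, map_smul, hb1, hb2, hb3]
      module
    rw [this, show (c * s' - c' * su) - (s' * c₂ - s₂ * c') * (c * s₁ - c₁ * su)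
            - (s₁ * c' - s' * c₁) * (c * s₂ - c₂ * su) = 0 by
        linear_combination (su * c' - c * s') * hdet', zero_smul]
  -- the fiber is the set of coatoms containing R
  have hfibeq : {U : Submodule (ZMod p) V | IsCoatom U ∧ der β U = Z}
      = {U : Submodule (ZMod p) V | IsCoatom U ∧ R ≤ U} := by
    ext U
    simp only [Set.mem_setOf_eq]
    constructor
    · rintro ⟨hc, hdZ⟩
      exact ⟨hc, L1 U hc fun x hx y hy => hdZ ▸ mem_der β hx hy⟩
    · rintro ⟨hc, hRle⟩
      refine ⟨hc, ?_⟩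
      have hmem : ∀ x ∈ U, ∀ y ∈ U, β x y ∈ Z := by
        by_contra h
        push_neg at h
        obtain ⟨x, hx, y, hy, hxy⟩ := h
        refine hc.1 (Submodule.eq_top_iff'.2 fun v => ?_)
        obtain ⟨r, hr, a, b, rfl⟩ := L2 x y hxy v
        exact U.add_mem (U.add_mem (hRle hr) (U.smul_mem a hx)) (U.smul_mem b hy)
      have hle : der β U ≤ Z := (der_le_iff β).2 hmem
      by_contra hne
      exact hZne ((hco U hc).2 Z (lt_of_le_of_ne hle hne))
  -- finrank of V ⧸ R is 2
  obtain ⟨x, y, hxy⟩ := hbne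
  have hrk2 : finrank (ZMod p) (V ⧸ R) = 2 := by
    have hli : LinearIndependent (ZMod p) ![R.mkQ x, R.mkQ y] := by
      rw [LinearIndependent.pair_iff]
      intro s t hst
      have hw : s • x + t • y ∈ R := by
        rw [← Submodule.ker_mkQ R, LinearMap.mem_ker, map_add, map_smul, map_smul]
        exact hst
      have hsmem : s • β x y ∈ Z := by
        have h1 := (memR _).1 hw y
        have h2 : β (s • x + t • y) y = s • β x y + t • β y y := by
          simp only [map_add, map_smul, LinearMap.add_apply, LinearMap.smul_apply]
        rwa [h2, halt y, smul_zero, add_zero] at h1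
      have htmem : t • β x y ∈ Z := by
        have h1 := (memR _).1 hw x
        have h2 : β (s • x + t • y) x = s • β x x + t • β y x := by
          simp only [map_add, map_smul, LinearMap.add_apply, LinearMap.smul_apply]
        rw [h2, halt x, smul_zero, zero_add, skew β halt y x, smul_neg] at h1
        rwa [← Z.neg_mem_iff]
      constructor
      · by_contra hs
        exact hxy (by simpa [smul_smul, inv_mul_cancel₀ hs] using Z.smul_mem s⁻¹ hsmem)
      · by_contra ht
        exact hxy (by simpa [smul_smul, inv_mul_cancel₀ ht] using Z.smul_mem t⁻¹ htmem)
    have hsp : ⊤ ≤ Submodule.span (ZMod p) (Set.range ![R.mkQ x, R.mkQ y]) := by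
      rintro q -
      obtain ⟨v, rfl⟩ := R.mkQ_surjective q
      obtain ⟨r, hr, a, b, rfl⟩ := L2 x y hxy v
      have h0 : R.mkQ r = 0 := by
        rwa [← LinearMap.mem_ker, Submodule.ker_mkQ]
      rw [map_add, map_add, map_smul, map_smul, h0, zero_add]
      refine Submodule.add_mem _ (Submodule.smul_mem _ _ ?_) (Submodule.smul_mem _ _ ?_)
      · exact Submodule.subset_span ⟨0, rfl⟩
      · exact Submodule.subset_span ⟨1, rfl⟩
    let bas : Basis (Fin 2) (ZMod p) (V ⧸ R) := Basis.mk hli hsp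
    rw [finrank_eq_card_basis bas, Fintype.card_fin]
  -- conclude by counting coatoms of the quotient
  rw [hfibeq, coatoms_above R,
    Set.ncard_image_of_injective _ (Submodule.comap_injective_of_surjective R.mkQ_surjective),
    coatom_card, hrk2]
  simp [Finset.sum_range_succ, Nat.add_comm]


end main


end Helpers

/-- In a morphic triple with `dim V = d`, the map `U ↦ U'` from maximal subspaces of
`V` to maximal subspaces of `W` has all its fibers of size `p + 1`; hence
`1 + p + ⋯ + p^(d-1)` is divisible by `1 + p`, and in particular `d` is even. -/
theorem fibers_and_d_even [Fact p.Prime]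
    {V W : Type*} [AddCommGroup V] [Module (ZMod p) V] [FiniteDimensional (ZMod p) V]
    [AddCommGroup W] [Module (ZMod p) W] [FiniteDimensional (ZMod p) W]
    (β : V →ₗ[ZMod p] V →ₗ[ZMod p] W) (hβ : IsMorphicTriple β)
    (d : ℕ) (hd : Module.finrank (ZMod p) V = d) :
    (∀ Z : Submodule (ZMod p) W,
        Z ∈ der β '' {U : Submodule (ZMod p) V | IsCoatom U} →
        Set.ncard {U : Submodule (ZMod p) V | IsCoatom U ∧ der β U = Z} = p + 1) ∧
      (1 + p) ∣ ∑ i ∈ Finset.range d, p ^ i ∧ Even d := by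
  classical
  obtain ⟨halt, htop, hco, -⟩ := hβ
  have part1 : ∀ Z : Submodule (ZMod p) W,
      Z ∈ der β '' {U : Submodule (ZMod p) V | IsCoatom U} →
      Set.ncard {U : Submodule (ZMod p) V | IsCoatom U ∧ der β U = Z} = p + 1 := by
    rintro Z ⟨U₀, hU₀, hder⟩
    exact fiber_ncard β halt htop hco hU₀ hder
  have hp2 : 2 ≤ p := (Fact.out : p.Prime).two_le
  -- counting
  have : Finite V := Module.finite_of_finite (ZMod p)
  have : Finite (Submodule (ZMod p) V) :=
    Finite.of_injective _ (SetLike.coe_injective (A := Submodule (ZMod p) V))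
  have : Fintype (Submodule (ZMod p) V) := Fintype.ofFinite _
  set C : Finset (Submodule (ZMod p) V) := Finset.univ.filter IsCoatom with hC
  have hset : {U : Submodule (ZMod p) V | IsCoatom U} = ↑C := by ext U; simp [hC]
  have hCcard : C.card = ∑ i ∈ Finset.range d, p ^ i := by
    have h := coatom_card (p := p) (X := V)
    rwa [hd, hset, Set.ncard_coe_finset] at h
  set I : Finset (Submodule (ZMod p) W) := C.image (der β) with hI
  have hpart : C.card = ∑ Z ∈ I, (C.filter (fun U => der β U = Z)).card :=
    Finset.card_eq_sum_card_fiberwise fun U hU => Finset.mem_image_of_mem _ hU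
  have hfibcard : ∀ Z ∈ I, (C.filter (fun U => der β U = Z)).card = p + 1 := by
    intro Z hZ
    obtain ⟨U₀, hU₀, hder⟩ := Finset.mem_image.1 hZ
    have hU₀' : IsCoatom U₀ := by simpa [hC] using hU₀
    have h1 := part1 Z ⟨U₀, hU₀', hder⟩
    have h2 : {U : Submodule (ZMod p) V | IsCoatom U ∧ der β U = Z}
        = ↑(C.filter (fun U => der β U = Z)) := by
      ext U; simp [hC, and_comm]
    rwa [h2, Set.ncard_coe_finset] at h1
  have hdvd : (1 + p) ∣ ∑ i ∈ Finset.range d, p ^ i := by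
    rw [← hCcard, hpart, Finset.sum_congr rfl hfibcard, Finset.sum_const, smul_eq_mul]
    exact ⟨I.card, by ring⟩
  refine ⟨part1, hdvd, ?_⟩
  -- parity
  by_contra hodd
  have h1 : ((p : ℤ) + 1) ∣ ∑ i ∈ Finset.range d, (p : ℤ) ^ i := by
    obtain ⟨k, hk⟩ := hdvd
    refine ⟨(k : ℤ), ?_⟩
    have h := congrArg (Nat.cast (R := ℤ)) hk
    push_cast at h
    linarith [h]
  have h2 : ((p : ℤ) + 1) ∣
      (∑ i ∈ Finset.range d, (p : ℤ) ^ i) - (∑ i ∈ Finset.range d, (-1 : ℤ) ^ i) := by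
    rw [← Finset.sum_sub_distrib]
    refine Finset.dvd_sum fun i _ => ?_
    have h3 : ((p : ℤ) - (-1)) ∣ (p : ℤ) ^ i - (-1) ^ i := sub_dvd_pow_sub_pow _ _ i
    simpa using h3
  have h3 := dvd_sub h1 h2
  rw [sub_sub_cancel, neg_one_geom_sum, if_neg hodd] at h3
  have h4 : ((p : ℤ) + 1) ≤ 1 := Int.le_of_dvd one_pos h3
  have h5 : (2 : ℤ) ≤ (p : ℤ) := by exact_mod_cast hp2
  linarith
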